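/- For any injective sequence r(1),...,r(B) of distinct indices from {1,...,N} with B < N, and positive reals λ_1,...,λ_N with Λ = Σ_{n=1}^N λ_n, the following identity holds: 1 = ∏_{k=3}^{B+1} (Λ - Σ_{i=1}^{k-1} λ_{r(i)})/(Λ - Σ_{i=2}^{k-1} λ_{r(i)}) + Σ_{j=2}^B [∏_{k=3}^{j} (Λ - Σ_{i=1}^{k-1} λ_{r(i)})/(Λ - Σ_{i=2}^{k-1} λ_{r(i)})] · λ_{r(1)}/(Λ - Σ_{i=2}^{j} λ_{r(i)}), where empty products equal 1 and empty sums equal 0. -/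

import Mathlib

open Finset

/-- Key identity verifying the full balance equations for the LRU invariant:
law of total probability for the position at which object `r 1` enters the cache. -/
theorem lru_balance_identity (N B : ℕ) (hN : 2 ≤ N) (hB : 1 ≤ B) (hBN : B < N)
    (lam : Fin N → ℝ) (hlam : ∀ n, 0 < lam n)
    (Λ : ℝ) (hΛ : Λ = ∑ n, lam n)
    (r : ℕ → Fin N) (hr : Set.InjOn r (Set.Icc 1 B)) :
    (1 : ℝ) =
      (∏ k ∈ Finset.Icc 3 (B + 1),
        (Λ - ∑ i ∈ Finset.Icc 1 (k - 1), lam (r i)) /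
          (Λ - ∑ i ∈ Finset.Icc 2 (k - 1), lam (r i)))
      + ∑ j ∈ Finset.Icc 2 B,
          (∏ k ∈ Finset.Icc 3 j,
            (Λ - ∑ i ∈ Finset.Icc 1 (k - 1), lam (r i)) /
              (Λ - ∑ i ∈ Finset.Icc 2 (k - 1), lam (r i))) *
            (lam (r 1) / (Λ - ∑ i ∈ Finset.Icc 2 j, lam (r i))) := by
  induction B with
  | zero => omega
  | succ B ih =>
    rcases Nat.eq_zero_or_pos B with hB0 | hB1
    · subst hB0; simp
    -- inductive step, B ≥ 1
    have hr' : Set.InjOn r (Set.Icc 1 B) := hr.mono (by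
      intro x hx; simp only [Set.mem_Icc] at *; omega)
    have IH := ih hB1 (by omega) hr'
    -- positivity of the denominator at B+1
    have hpos : (0:ℝ) < Λ - ∑ i ∈ Finset.Icc 2 (B+1), lam (r i) := by
      have hinj : ∀ x ∈ Finset.Icc 2 (B+1), ∀ y ∈ Finset.Icc 2 (B+1),
          r x = r y → x = y := by
        intro x hx y hy h
        simp only [Finset.mem_Icc] at hx hy
        exact hr (by simp; omega) (by simp; omega) h
      have hsum : ∑ i ∈ Finset.Icc 2 (B+1), lam (r i)
          = ∑ n ∈ (Finset.Icc 2 (B+1)).image r, lam n :=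
        (Finset.sum_image hinj).symm
      have hnotmem : r 1 ∉ (Finset.Icc 2 (B+1)).image r := by
        simp only [Finset.mem_image, Finset.mem_Icc, not_exists]
        rintro i ⟨hi, heq⟩
        have := @hr i (by simp; omega) 1 (by simp) heq
        omega
      have hlt : ∑ n ∈ (Finset.Icc 2 (B+1)).image r, lam n < ∑ n, lam n :=
        Finset.sum_lt_sum_of_subset (Finset.subset_univ _) (Finset.mem_univ (r 1))
          hnotmem (hlam _) (fun i _ _ => (hlam i).le)
      rw [hsum, hΛ]; linarith
    have hD : Λ - ∑ i ∈ Finset.Icc 2 (B+1), lam (r i) ≠ 0 := ne_of_gt hpos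
    -- S1(B+1) = lam (r 1) + S2(B+1)
    have hsplit : ∑ i ∈ Finset.Icc 1 (B+1), lam (r i)
        = lam (r 1) + ∑ i ∈ Finset.Icc 2 (B+1), lam (r i) := by
      have h1 : Finset.Icc 1 (B+1) = insert 1 (Finset.Icc 2 (B+1)) := by
        ext x; simp; omega
      rw [h1, Finset.sum_insert (by simp)]
    -- split product and sum
    have hprod : Finset.Icc 3 (B+1+1) = insert (B+2) (Finset.Icc 3 (B+1)) := by
      ext x; simp; omega
    have hsumset : Finset.Icc 2 (B+1) = insert (B+1) (Finset.Icc 2 B) := by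
      ext x; simp; omega
    rw [hprod, Finset.prod_insert (by simp), hsumset, Finset.sum_insert (by simp)]
    set P : ℝ := ∏ k ∈ Finset.Icc 3 (B+1),
      (Λ - ∑ i ∈ Finset.Icc 1 (k - 1), lam (r i)) /
        (Λ - ∑ i ∈ Finset.Icc 2 (k - 1), lam (r i)) with hP
    have hS : ∑ j ∈ Finset.Icc 2 B,
        (∏ k ∈ Finset.Icc 3 j,
          (Λ - ∑ i ∈ Finset.Icc 1 (k - 1), lam (r i)) /
            (Λ - ∑ i ∈ Finset.Icc 2 (k - 1), lam (r i))) *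
          (lam (r 1) / (Λ - ∑ i ∈ Finset.Icc 2 j, lam (r i))) = 1 - P := by
      linarith [IH]
    have hk : B + 2 - 1 = B + 1 := rfl
    rw [hk, hS, hsplit]
    field_simp
    ring
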